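/- Let ρ_A and ρ_B be density matrices on ℂ^n, let (σ_i)_{i∈I} be a finite family of density matrices, and let (p_i) and (q_i) be nonnegative weights each summing to 1 with Σ_i p_i σ_i = ρ_A and Σ_i q_i σ_i = ρ_B. Then Σ_i √(p_i q_i) ≤ F(ρ_A, ρ_B). Consequently C(ρ_A, ρ_B) ≤ F(ρ_A, ρ_B). -/

import Mathlib

open Matrix BigOperators
open scoped ComplexOrder

/-- A density matrix: positive semidefinite with trace 1. -/
def IsDensityMatrix {d : Type*} [Fintype d] [DecidableEq d]
    (ρ : Matrix d d ℂ) : Prop :=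
  ρ.PosSemidef ∧ ρ.trace = 1

/-- The compatibility `C(ρA, ρB)`: the supremum, over all finite families of density
matrices `σ` and weight vectors `p`, `q` (nonnegative, summing to 1) with
`∑ i, p i • σ i = ρA` and `∑ i, q i • σ i = ρB`, of the Bhattacharyya overlap
`∑ i, √(p i * q i)`. -/
noncomputable def compat {d : Type*} [Fintype d] [DecidableEq d]
    (ρA ρB : Matrix d d ℂ) : ℝ :=
  sSup { c : ℝ | ∃ (m : ℕ) (σ : Fin m → Matrix d d ℂ) (p q : Fin m → ℝ),
    (∀ i, IsDensityMatrix (σ i)) ∧ (∀ i, 0 ≤ p i) ∧ (∀ i, 0 ≤ q i) ∧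
    ∑ i, p i = 1 ∧ ∑ i, q i = 1 ∧
    ∑ i, p i • σ i = ρA ∧ ∑ i, q i • σ i = ρB ∧
    c = ∑ i, Real.sqrt (p i * q i) }

open scoped Classical in
/-- The positive semidefinite square root of a positive semidefinite matrix
(junk value `0` on non-PSD matrices). -/
noncomputable def psdSqrt {d : Type*} [Fintype d] [DecidableEq d]
    (A : Matrix d d ℂ) : Matrix d d ℂ :=
  if h : A.PosSemidef then
    (h.1.eigenvectorUnitary : Matrix d d ℂ) *
      diagonal (fun i => ((Real.sqrt (h.1.eigenvalues i) : ℝ) : ℂ)) *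
      (star h.1.eigenvectorUnitary : Matrix d d ℂ) else 0

/-- The fidelity `F(ρA, ρB) = Tr √(√ρA ρB √ρA)`. -/
noncomputable def fidelity {d : Type*} [Fintype d] [DecidableEq d]
    (ρA ρB : Matrix d d ℂ) : ℝ :=
  (psdSqrt (psdSqrt ρA * ρB * psdSqrt ρA)).trace.re

/-- The pure-state density matrix `|ψ⟩⟨ψ|` associated to a vector `ψ`. -/
def pureState {d : Type*} [Fintype d] [DecidableEq d] (ψ : d → ℂ) : Matrix d d ℂ :=
  Matrix.vecMulVec ψ (star ψ)

set_option linter.unusedSectionVars false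

namespace Matrix.PosSemidef
variable {d : Type*} [Fintype d] [DecidableEq d]

noncomputable def sqrt {A : Matrix d d ℂ} (h : A.PosSemidef) : Matrix d d ℂ :=
  (h.1.eigenvectorUnitary : Matrix d d ℂ) *
    diagonal (fun i => ((Real.sqrt (h.1.eigenvalues i) : ℝ) : ℂ)) *
    (star h.1.eigenvectorUnitary : Matrix d d ℂ)

lemma posSemidef_sqrt {A : Matrix d d ℂ} (h : A.PosSemidef) : h.sqrt.PosSemidef := by
  unfold sqrt
  have hd : (diagonal (fun i => ((Real.sqrt (h.1.eigenvalues i) : ℝ) : ℂ))).PosSemidef := by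
    rw [posSemidef_diagonal_iff]
    intro i
    rw [Complex.nonneg_iff]
    constructor <;> simp [Real.sqrt_nonneg]
  simpa [star_eq_conjTranspose] using
    hd.mul_mul_conjTranspose_same (h.1.eigenvectorUnitary : Matrix d d ℂ)

lemma sqrt_mul_self {A : Matrix d d ℂ} (h : A.PosSemidef) : h.sqrt * h.sqrt = A := by
  unfold sqrt
  set U := (h.1.eigenvectorUnitary : Matrix d d ℂ)
  have hU : star U * U = 1 := (mem_unitaryGroup_iff').mp h.1.eigenvectorUnitary.2
  calc U * diagonal (fun i => ((Real.sqrt (h.1.eigenvalues i) : ℝ) : ℂ)) * star U *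
        (U * diagonal (fun i => ((Real.sqrt (h.1.eigenvalues i) : ℝ) : ℂ)) * star U)
      = U * (diagonal (fun i => ((Real.sqrt (h.1.eigenvalues i) : ℝ) : ℂ)) * (star U * U) *
          diagonal (fun i => ((Real.sqrt (h.1.eigenvalues i) : ℝ) : ℂ))) * star U := by
        noncomm_ring
    _ = A := by
      rw [hU, mul_one, diagonal_mul_diagonal]
      have e : (fun i => ((Real.sqrt (h.1.eigenvalues i) : ℝ) : ℂ) *
          ((Real.sqrt (h.1.eigenvalues i) : ℝ) : ℂ)) = fun i => ((h.1.eigenvalues i : ℝ) : ℂ) :=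
        funext fun i => by
          rw [← Complex.ofReal_mul, Real.mul_self_sqrt (h.eigenvalues_nonneg i)]
      rw [e]
      exact h.1.spectral_theorem.symm

end Matrix.PosSemidef

namespace P4
variable {d : Type*} [Fintype d] [DecidableEq d]

lemma trace_re_nonneg {M : Matrix d d ℂ} (hM : M.PosSemidef) : 0 ≤ M.trace.re := by
  have h : ∀ i, 0 ≤ (M i i).re := by
    intro i
    have := hM.re_dotProduct_nonneg (Pi.single i 1)
    simpa [dotProduct, Matrix.mulVec, Pi.single_apply, Finset.sum_ite_eq] using this
  simpa [Matrix.trace, Matrix.diag, Complex.re_sum] using Finset.sum_nonneg (fun i _ => h i)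

lemma trace_mul_re_nonneg {M N : Matrix d d ℂ} (hM : M.PosSemidef) (hN : N.PosSemidef) :
    0 ≤ (M * N).trace.re := by
  have hs := hM.posSemidef_sqrt
  have h1 : M * N = hM.sqrt * (hM.sqrt * N) := by
    rw [← mul_assoc, hM.sqrt_mul_self]
  rw [h1, Matrix.trace_mul_comm]
  have : hM.sqrt * N * hM.sqrt = hM.sqrt * N * hM.sqrtᴴ := by rw [hs.isHermitian]
  exact trace_re_nonneg (by rw [mul_assoc, ← mul_assoc, this]; exact hN.mul_mul_conjTranspose_same _)

lemma re_dot_le (u v : d → ℂ) :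
    (dotProduct (star u) v).re ≤
      Real.sqrt (dotProduct (star u) u).re * Real.sqrt (dotProduct (star v) v).re := by
  have h1 : (dotProduct (star u) v).re = ∑ i, ((starRingEnd ℂ) (u i) * v i).re := by
    simp [dotProduct, Complex.re_sum]
  have h2 : ∀ w : d → ℂ, (dotProduct (star w) w).re = ∑ i, ‖w i‖ ^ 2 := by
    intro w
    simp only [dotProduct, Pi.star_apply, Complex.re_sum]
    congr 1; ext i
    rw [Complex.sq_norm, Complex.normSq_apply]
    simp only [Complex.star_def, Complex.mul_re, Complex.conj_re, Complex.conj_im]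
    ring
  rw [h1, h2, h2]
  calc ∑ i, ((starRingEnd ℂ) (u i) * v i).re
      ≤ ∑ i, ‖u i‖ * ‖v i‖ := by
        apply Finset.sum_le_sum
        intro i _
        calc ((starRingEnd ℂ) (u i) * v i).re ≤ ‖(starRingEnd ℂ) (u i) * v i‖ :=
              Complex.re_le_norm _
          _ = ‖u i‖ * ‖v i‖ := by
              rw [norm_mul, Complex.norm_conj]
    _ ≤ Real.sqrt (∑ i, ‖u i‖ ^ 2) * Real.sqrt (∑ i, ‖v i‖ ^ 2) := by
        have := Finset.sum_sq_le_sum_mul_sum_of_sq_eq_mul Finset.univ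
          (f := fun i => ‖u i‖ ^ 2) (g := fun i => ‖v i‖ ^ 2)
          (r := fun i => ‖u i‖ * ‖v i‖)
          (fun i _ => by positivity) (fun i _ => by positivity) (fun i _ => by ring)
        have hnn : 0 ≤ ∑ i, ‖u i‖ * ‖v i‖ :=
          Finset.sum_nonneg fun i _ => by positivity
        calc ∑ i, ‖u i‖ * ‖v i‖
            = Real.sqrt ((∑ i, ‖u i‖ * ‖v i‖) ^ 2) := by
              rw [Real.sqrt_sq hnn]
          _ ≤ Real.sqrt ((∑ i, ‖u i‖ ^ 2) * ∑ i, ‖v i‖ ^ 2) :=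
              Real.sqrt_le_sqrt this
          _ = _ := Real.sqrt_mul (by positivity) _

lemma trace_conj_dot (X Y : Matrix d d ℂ) :
    (Xᴴ * Y).trace =
      dotProduct (star (fun p : d × d => X p.1 p.2)) (fun p : d × d => Y p.1 p.2) := by
  simp only [Matrix.trace, Matrix.diag, Matrix.mul_apply, Matrix.conjTranspose_apply,
    dotProduct, Fintype.sum_prod_type, Pi.star_apply]
  exact Finset.sum_comm

lemma trace_cs (X Y : Matrix d d ℂ) :
    ((Xᴴ * Y).trace).re ≤ Real.sqrt ((Xᴴ * X).trace).re * Real.sqrt ((Yᴴ * Y).trace).re := by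
  rw [trace_conj_dot, trace_conj_dot, trace_conj_dot]
  exact re_dot_le _ _

lemma cs_trace {G Gi σ : Matrix d d ℂ} (hGGi : G * Gi = 1) (hσ : σ.PosSemidef) :
    (σ.trace.re) ^ 2 ≤ ((G * Gᴴ * σ).trace).re * ((Giᴴ * Gi * σ).trace).re := by
  set s := hσ.sqrt with hs
  have hsh : sᴴ = s := hσ.posSemidef_sqrt.isHermitian
  have hss : s * s = σ := hσ.sqrt_mul_self
  set M := Gᴴ * s with hM
  set N := Gi * s with hN
  have key1 : Mᴴ * N = σ := by
    rw [hM, hN, Matrix.conjTranspose_mul, Matrix.conjTranspose_conjTranspose, hsh]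
    calc s * G * (Gi * s) = s * (G * Gi) * s := by noncomm_ring
      _ = σ := by rw [hGGi, mul_one, hss]
  have e2 : Mᴴ * M = s * (G * Gᴴ) * s := by
    rw [hM, Matrix.conjTranspose_mul, Matrix.conjTranspose_conjTranspose, hsh]
    noncomm_ring
  have key2 : ((Mᴴ * M).trace) = ((G * Gᴴ * σ).trace) := by
    rw [e2, Matrix.trace_mul_cycle, hss, Matrix.trace_mul_comm]
  have e3 : Nᴴ * N = s * (Giᴴ * Gi) * s := by
    rw [hN, Matrix.conjTranspose_mul, hsh]
    noncomm_ring
  have key3 : ((Nᴴ * N).trace) = ((Giᴴ * Gi * σ).trace) := by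
    rw [e3, Matrix.trace_mul_cycle, hss, Matrix.trace_mul_comm]
  have h0 : 0 ≤ σ.trace.re := trace_re_nonneg hσ
  have hcs := trace_cs M N
  rw [key1, key2, key3] at hcs
  have hGG : 0 ≤ ((G * Gᴴ * σ).trace).re :=
    trace_mul_re_nonneg (Matrix.posSemidef_self_mul_conjTranspose G) hσ
  have hGi : 0 ≤ ((Giᴴ * Gi * σ).trace).re :=
    trace_mul_re_nonneg (Matrix.posSemidef_conjTranspose_mul_self Gi) hσ
  calc (σ.trace.re) ^ 2 ≤ (Real.sqrt ((G * Gᴴ * σ).trace).re *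
        Real.sqrt ((Giᴴ * Gi * σ).trace).re) ^ 2 := by
        apply pow_le_pow_left₀ h0 hcs
    _ = _ := by
        rw [mul_pow, Real.sq_sqrt hGG, Real.sq_sqrt hGi]


variable {d : Type*} [Fintype d] [DecidableEq d]

variable {H : Matrix d d ℂ} (hH : H.IsHermitian)

/-- Functional calculus via the spectral theorem. -/
noncomputable def specM (f : ℝ → ℝ) : Matrix d d ℂ :=
  (hH.eigenvectorUnitary : Matrix d d ℂ) *
    Matrix.diagonal (fun i => (f (hH.eigenvalues i) : ℂ)) *
    (star (hH.eigenvectorUnitary : Matrix d d ℂ))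

lemma specM_congr {f g : ℝ → ℝ} (h : ∀ i, f (hH.eigenvalues i) = g (hH.eigenvalues i)) :
    specM hH f = specM hH g := by
  unfold specM
  have : (fun i => (f (hH.eigenvalues i) : ℂ)) = (fun i => (g (hH.eigenvalues i) : ℂ)) := by
    funext i; rw [h i]
  rw [this]

lemma star_mul_self_eigU : (star (hH.eigenvectorUnitary : Matrix d d ℂ)) *
    (hH.eigenvectorUnitary : Matrix d d ℂ) = 1 :=
  (Matrix.mem_unitaryGroup_iff').mp hH.eigenvectorUnitary.2

lemma mul_star_self_eigU : (hH.eigenvectorUnitary : Matrix d d ℂ) *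
    (star (hH.eigenvectorUnitary : Matrix d d ℂ)) = 1 :=
  (Matrix.mem_unitaryGroup_iff).mp hH.eigenvectorUnitary.2

lemma specM_mul (f g : ℝ → ℝ) :
    specM hH f * specM hH g = specM hH (fun x => f x * g x) := by
  unfold specM
  set U := (hH.eigenvectorUnitary : Matrix d d ℂ)
  calc U * Matrix.diagonal (fun i => (f (hH.eigenvalues i) : ℂ)) * star U *
        (U * Matrix.diagonal (fun i => (g (hH.eigenvalues i) : ℂ)) * star U)
      = U * (Matrix.diagonal (fun i => (f (hH.eigenvalues i) : ℂ)) * ((star U * U) *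
          Matrix.diagonal (fun i => (g (hH.eigenvalues i) : ℂ)))) * star U := by
        noncomm_ring
    _ = _ := by
        rw [star_mul_self_eigU hH, one_mul, Matrix.diagonal_mul_diagonal]
        push_cast
        rfl

lemma specM_add (f g : ℝ → ℝ) :
    specM hH f + specM hH g = specM hH (fun x => f x + g x) := by
  unfold specM
  rw [← Matrix.add_mul, ← Matrix.mul_add, Matrix.diagonal_add]
  push_cast
  rfl

lemma specM_one : specM hH (fun _ => 1) = 1 := by
  unfold specM
  have : Matrix.diagonal (fun i : d => ((1 : ℝ) : ℂ)) = 1 := by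
    simp
  rw [this, mul_one, mul_star_self_eigU hH]

lemma specM_const (c : ℝ) : specM hH (fun _ => c) = (c : ℂ) • 1 := by
  unfold specM
  have : Matrix.diagonal (fun i : d => ((c : ℝ) : ℂ)) = (c : ℂ) • 1 := by
    rw [Matrix.smul_one_eq_diagonal]
  rw [this]
  rw [Matrix.mul_smul, Matrix.smul_mul, mul_one, mul_star_self_eigU hH]

lemma specM_id : specM hH (fun x => x) = H := by
  unfold specM
  exact hH.spectral_theorem.symm

lemma specM_isHermitian (f : ℝ → ℝ) : (specM hH f).IsHermitian := by
  unfold specM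
  set U := (hH.eigenvectorUnitary : Matrix d d ℂ)
  unfold Matrix.IsHermitian
  rw [Matrix.conjTranspose_mul, Matrix.conjTranspose_mul, Matrix.diagonal_conjTranspose]
  have : star (fun i => (f (hH.eigenvalues i) : ℂ)) = fun i => (f (hH.eigenvalues i) : ℂ) := by
    funext i
    simp [Complex.conj_ofReal]
  rw [this, Matrix.star_eq_conjTranspose, Matrix.conjTranspose_conjTranspose]
  noncomm_ring

lemma specM_posSemidef {f : ℝ → ℝ} (h : ∀ i, 0 ≤ f (hH.eigenvalues i)) :
    (specM hH f).PosSemidef := by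
  unfold specM
  have hd : (Matrix.diagonal (fun i => (f (hH.eigenvalues i) : ℂ))).PosSemidef := by
    rw [Matrix.posSemidef_diagonal_iff]
    intro i
    rw [Complex.nonneg_iff]
    constructor <;> simp [h i]
  simpa [Matrix.star_eq_conjTranspose] using
    hd.mul_mul_conjTranspose_same (hH.eigenvectorUnitary : Matrix d d ℂ)

lemma specM_trace (f : ℝ → ℝ) : (specM hH f).trace = ∑ i, (f (hH.eigenvalues i) : ℂ) := by
  unfold specM
  rw [Matrix.trace_mul_cycle, star_mul_self_eigU hH, one_mul, Matrix.trace_diagonal]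

lemma specM_trace_re (f : ℝ → ℝ) : ((specM hH f).trace).re = ∑ i, f (hH.eigenvalues i) := by
  rw [specM_trace]
  rw [Complex.re_sum]
  simp


variable {d : Type*} [Fintype d] [DecidableEq d]

lemma quad_eq (X : Matrix d d ℂ) (v : d → ℂ) :
    dotProduct (star v) ((Xᴴ * X) *ᵥ v) =
      dotProduct (star (X *ᵥ v)) (X *ᵥ v) := by
  rw [← Matrix.mulVec_mulVec, dotProduct_mulVec, ← Matrix.star_mulVec]

lemma herm_dot_im {M : Matrix d d ℂ} (hM : M.IsHermitian) (v : d → ℂ) :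
    (dotProduct (star v) (M *ᵥ v)).im = 0 := by
  have h : (starRingEnd ℂ) (dotProduct (star v) (M *ᵥ v)) =
      dotProduct (star v) (M *ᵥ v) := by
    have h1 : star (dotProduct (star v) (M *ᵥ v)) =
        dotProduct (star (M *ᵥ v)) v := by
      rw [← Matrix.star_dotProduct_star, star_star]
    rw [← Complex.star_def, h1, Matrix.star_mulVec, hM.eq, ← dotProduct_mulVec]
  exact Complex.conj_eq_iff_im.mp h

lemma dot_le_of_psd_sub {M N : Matrix d d ℂ} (h : (N - M).PosSemidef) (v : d → ℂ) :
    (dotProduct (star v) (M *ᵥ v)).re ≤ (dotProduct (star v) (N *ᵥ v)).re := by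
  have := h.re_dotProduct_nonneg v
  simp only [Matrix.sub_mulVec, dotProduct_sub] at this
  have h2 : (0:ℝ) ≤ ((dotProduct (star v) (N *ᵥ v)) - (dotProduct (star v) (M *ᵥ v))).re := this
  rw [Complex.sub_re] at h2
  linarith

lemma dot_self_re_nonneg (w : d → ℂ) : 0 ≤ (dotProduct (star w) w).re := by
  have : ((1 : Matrix d d ℂ) - 1).PosSemidef := by simpa using Matrix.PosSemidef.zero (n := d) (R := ℂ)
  have h : ∀ i, 0 ≤ ((starRingEnd ℂ) (w i) * w i).re := by
    intro i
    rw [← Complex.normSq_eq_conj_mul_self]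
    exact Complex.normSq_nonneg _
  simp only [dotProduct, Pi.star_apply, Complex.re_sum]
  exact Finset.sum_nonneg fun i _ => h i

lemma sqrt_add_le (a b : ℝ) (ha : 0 ≤ a) (hb : 0 ≤ b) :
    Real.sqrt (a + b) ≤ Real.sqrt a + Real.sqrt b := by
  have h1 : a + b ≤ (Real.sqrt a + Real.sqrt b) ^ 2 := by
    have := Real.sq_sqrt ha
    have := Real.sq_sqrt hb
    have := Real.sqrt_nonneg a
    have := Real.sqrt_nonneg b
    nlinarith
  calc Real.sqrt (a + b) ≤ Real.sqrt ((Real.sqrt a + Real.sqrt b) ^ 2) := Real.sqrt_le_sqrt h1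
    _ = _ := Real.sqrt_sq (by positivity)


lemma density_le_one {ρ : Matrix d d ℂ} (hρ : ρ.PosSemidef) (htr : ρ.trace = 1) :
    ((1 : Matrix d d ℂ) - ρ).PosSemidef := by
  have hH := hρ.1
  have hsum : ∑ i, hH.eigenvalues i = 1 := by
    have h := specM_trace_re hH (fun x => x)
    rw [specM_id, htr] at h
    simpa using h.symm
  have hle : ∀ i, hH.eigenvalues i ≤ 1 := by
    intro i
    rw [← hsum]
    exact Finset.single_le_sum (fun j _ => hρ.eigenvalues_nonneg j) (Finset.mem_univ i)
  have e : specM hH (fun x => 1 - x) = 1 - ρ := by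
    have h := specM_add hH (fun x => 1 - x) (fun x => x)
    rw [specM_id] at h
    have h2 : specM hH (fun x => 1 - x + x) = 1 := by
      rw [specM_congr hH (g := fun _ => 1) (fun i => by ring), specM_one]
    exact eq_sub_of_add_eq (h.trans h2)
  rw [← e]
  exact specM_posSemidef hH (fun i => by have := hle i; linarith)

lemma contraction {ρ : Matrix d d ℂ} (hρ : ρ.PosSemidef)
    (h1 : ((1 : Matrix d d ℂ) - ρ).PosSemidef) (w : d → ℂ) :
    (dotProduct (star (hρ.sqrt *ᵥ w)) (hρ.sqrt *ᵥ w)).re ≤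
      (dotProduct (star w) w).re := by
  have hq := quad_eq hρ.sqrt w
  rw [hρ.posSemidef_sqrt.isHermitian.eq, hρ.sqrt_mul_self] at hq
  rw [← hq]
  calc (dotProduct (star w) (ρ *ᵥ w)).re
      ≤ (dotProduct (star w) ((1 : Matrix d d ℂ) *ᵥ w)).re := dot_le_of_psd_sub h1 w
    _ = _ := by rw [Matrix.one_mulVec]

lemma stepG {ρA ρB : Matrix d d ℂ} (hA : ρA.PosSemidef) (htrA : ρA.trace = 1)
    (hB : ρB.PosSemidef) (htrB : ρB.trace = 1) {ε : ℝ} (hε : 0 < ε) :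
    (specM hA.1 Real.sqrt * ρB * specM hA.1 Real.sqrt +
      (((2 * Real.sqrt ε + ε : ℝ)) : ℂ) • 1 -
      specM hA.1 (fun x => Real.sqrt (x + ε)) * ρB *
        specM hA.1 (fun x => Real.sqrt (x + ε))).PosSemidef := by
  have hlam : ∀ i, 0 ≤ hA.1.eigenvalues i := hA.eigenvalues_nonneg
  set S := specM hA.1 Real.sqrt with hSdef
  set R := specM hA.1 (fun x => Real.sqrt (x + ε)) with hRdef
  set E := specM hA.1 (fun x => Real.sqrt (x + ε) - Real.sqrt x) with hEdef
  have hSh : Sᴴ = S := specM_isHermitian hA.1 _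
  have hRh : Rᴴ = R := specM_isHermitian hA.1 _
  have hEh : Eᴴ = E := specM_isHermitian hA.1 _
  have hBh : ρBᴴ = ρB := hB.1
  have hBle := density_le_one hB htrB
  have hAle := density_le_one hA htrA
  have hRSE : R = S + E := by
    rw [hSdef, hEdef, specM_add]
    exact (specM_congr hA.1 (fun i => by ring)).symm
  have hSS : S * S = ρA := by
    rw [hSdef, specM_mul]
    rw [specM_congr hA.1 (g := fun x => x) (fun i => Real.mul_self_sqrt (hlam i)), specM_id]
  have he_nonneg : ∀ i, 0 ≤ Real.sqrt (hA.1.eigenvalues i + ε) - Real.sqrt (hA.1.eigenvalues i) :=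
    fun i => by
      have := Real.sqrt_le_sqrt (by linarith [hε.le] : hA.1.eigenvalues i ≤ hA.1.eigenvalues i + ε)
      linarith
  have he_le : ∀ i, Real.sqrt (hA.1.eigenvalues i + ε) - Real.sqrt (hA.1.eigenvalues i)
      ≤ Real.sqrt ε := fun i => by
    have := sqrt_add_le (hA.1.eigenvalues i) ε (hlam i) hε.le
    linarith
  have hEEle : ((((ε : ℝ)) : ℂ) • (1 : Matrix d d ℂ) - E * E).PosSemidef := by
    have hEE : E * E = specM hA.1 (fun x =>
        (Real.sqrt (x + ε) - Real.sqrt x) * (Real.sqrt (x + ε) - Real.sqrt x)) := by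
      rw [hEdef, specM_mul]
    have e : specM hA.1 (fun x => ε -
        (Real.sqrt (x + ε) - Real.sqrt x) * (Real.sqrt (x + ε) - Real.sqrt x)) =
        ((ε : ℝ) : ℂ) • 1 - E * E := by
      have h := specM_add hA.1
        (fun x => ε - (Real.sqrt (x + ε) - Real.sqrt x) * (Real.sqrt (x + ε) - Real.sqrt x))
        (fun x => (Real.sqrt (x + ε) - Real.sqrt x) * (Real.sqrt (x + ε) - Real.sqrt x))
      rw [← hEE] at h
      have h2 : specM hA.1 (fun x => ε -
          (Real.sqrt (x + ε) - Real.sqrt x) * (Real.sqrt (x + ε) - Real.sqrt x) +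
          (Real.sqrt (x + ε) - Real.sqrt x) * (Real.sqrt (x + ε) - Real.sqrt x)) =
          ((ε : ℝ) : ℂ) • 1 := by
        rw [specM_congr hA.1 (g := fun _ => ε) (fun i => by ring), specM_const]
      exact eq_sub_of_add_eq (h.trans h2)
    rw [← e]
    refine specM_posSemidef hA.1 (fun i => ?_)
    have h1 := he_nonneg i
    have h2 := he_le i
    have h3 : Real.sqrt ε * Real.sqrt ε = ε := Real.mul_self_sqrt hε.le
    nlinarith
  set T := hB.sqrt with hTdef
  have hTh : Tᴴ = T := hB.posSemidef_sqrt.isHermitian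
  have hTT : T * T = ρB := hB.sqrt_mul_self
  -- the target is Hermitian
  have hHerm : (S * ρB * S + ((2 * Real.sqrt ε + ε : ℝ) : ℂ) • 1 - R * ρB * R).IsHermitian := by
    show _ = _
    rw [Matrix.conjTranspose_sub, Matrix.conjTranspose_add, Matrix.conjTranspose_smul,
      Matrix.conjTranspose_mul, Matrix.conjTranspose_mul, Matrix.conjTranspose_mul,
      Matrix.conjTranspose_mul, hSh, hRh, hBh, Matrix.conjTranspose_one]
    have : star ((2 * Real.sqrt ε + ε : ℝ) : ℂ) = ((2 * Real.sqrt ε + ε : ℝ) : ℂ) :=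
      Complex.conj_ofReal _
    rw [this]
    noncomm_ring
  refine Matrix.PosSemidef.of_dotProduct_mulVec_nonneg hHerm (fun v => ?_)
  rw [Complex.nonneg_iff]
  refine ⟨?_, (herm_dot_im hHerm v).symm⟩
  -- expand the real part
  set u1 := T *ᵥ (S *ᵥ v) with hu1
  set u2 := T *ᵥ (E *ᵥ v) with hu2
  have hKquad : dotProduct (star v) ((S * ρB * S) *ᵥ v) = dotProduct (star u1) u1 := by
    have e : (T * S)ᴴ * (T * S) = S * ρB * S := by
      rw [Matrix.conjTranspose_mul, hTh, hSh, ← hTT]; noncomm_ring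
    rw [← e, quad_eq, ← Matrix.mulVec_mulVec]
  have hRquad : dotProduct (star v) ((R * ρB * R) *ᵥ v) =
      dotProduct (star (u1 + u2)) (u1 + u2) := by
    have e : (T * R)ᴴ * (T * R) = R * ρB * R := by
      rw [Matrix.conjTranspose_mul, hTh, hRh, ← hTT]; noncomm_ring
    rw [← e, quad_eq, ← Matrix.mulVec_mulVec]
    have : R *ᵥ v = S *ᵥ v + E *ᵥ v := by rw [hRSE, Matrix.add_mulVec]
    rw [this, Matrix.mulVec_add]
  set a1 := (dotProduct (star u1) u1).re with ha1
  set a2 := (dotProduct (star u2) u2).re with ha2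
  set nv := (dotProduct (star v) v).re with hnv
  set cross := (dotProduct (star u1) u2).re with hcross
  have hexp : (dotProduct (star (u1 + u2)) (u1 + u2)).re = a1 + 2 * cross + a2 := by
    have hcross2 : (dotProduct (star u2) u1).re = cross := by
      have h : star (dotProduct (star u1) u2) = dotProduct (star u2) u1 := by
        rw [← Matrix.star_dotProduct_star, star_star]
      rw [← h, Complex.star_def, Complex.conj_re]
    rw [star_add, add_dotProduct, dotProduct_add, dotProduct_add,
      Complex.add_re, Complex.add_re, Complex.add_re]
    linarith [hcross2]
  -- bounds
  have hEv : (dotProduct (star (E *ᵥ v)) (E *ᵥ v)).re ≤ ε * nv := by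
    have hq := quad_eq E v
    rw [hEh] at hq
    have h1 : (dotProduct (star v) ((E * E) *ᵥ v)).re ≤
        (dotProduct (star v) ((((ε : ℝ) : ℂ) • (1 : Matrix d d ℂ)) *ᵥ v)).re :=
      dot_le_of_psd_sub hEEle v
    have h2 : (dotProduct (star v) ((((ε : ℝ) : ℂ) • (1 : Matrix d d ℂ)) *ᵥ v)).re
        = ε * nv := by
      rw [Matrix.smul_mulVec, Matrix.one_mulVec, dotProduct_smul]
      rw [hnv, smul_eq_mul, Complex.mul_re, Complex.ofReal_re, Complex.ofReal_im]
      ring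
    rw [← hq]
    linarith
  have hb2 : a2 ≤ ε * nv := by
    have h := contraction hB hBle (E *ᵥ v)
    rw [← hTdef] at h
    calc a2 ≤ (dotProduct (star (E *ᵥ v)) (E *ᵥ v)).re := h
      _ ≤ ε * nv := hEv
  have hb1 : a1 ≤ nv := by
    have h := contraction hB hBle (S *ᵥ v)
    rw [← hTdef] at h
    have hSv : (dotProduct (star (S *ᵥ v)) (S *ᵥ v)).re ≤ nv := by
      have hq := quad_eq S v
      rw [hSh, hSS] at hq
      rw [← hq]
      calc (dotProduct (star v) (ρA *ᵥ v)).re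
          ≤ (dotProduct (star v) ((1 : Matrix d d ℂ) *ᵥ v)).re := dot_le_of_psd_sub hAle v
        _ = nv := by rw [Matrix.one_mulVec]
    exact le_trans h hSv
  have ha1nn : 0 ≤ a1 := dot_self_re_nonneg u1
  have ha2nn : 0 ≤ a2 := dot_self_re_nonneg u2
  have hnvnn : 0 ≤ nv := dot_self_re_nonneg v
  have hcross_le : cross ≤ Real.sqrt ε * nv := by
    have h1 := re_dot_le u1 u2
    have h2 : Real.sqrt a1 ≤ Real.sqrt nv := Real.sqrt_le_sqrt hb1
    have h3 : Real.sqrt a2 ≤ Real.sqrt (ε * nv) := Real.sqrt_le_sqrt hb2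
    have h4 : Real.sqrt (ε * nv) = Real.sqrt ε * Real.sqrt nv := Real.sqrt_mul hε.le _
    have h5 : Real.sqrt nv * Real.sqrt nv = nv := Real.mul_self_sqrt hnvnn
    calc cross ≤ Real.sqrt a1 * Real.sqrt a2 := h1
      _ ≤ Real.sqrt nv * (Real.sqrt ε * Real.sqrt nv) := by
          apply mul_le_mul h2 (by rw [← h4]; exact h3) (Real.sqrt_nonneg _) (Real.sqrt_nonneg _)
      _ = Real.sqrt ε * (Real.sqrt nv * Real.sqrt nv) := by ring
      _ = Real.sqrt ε * nv := by rw [h5]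
  -- final computation
  rw [Matrix.sub_mulVec, Matrix.add_mulVec, dotProduct_sub, dotProduct_add,
    Complex.sub_re, Complex.add_re, hKquad, hRquad, hexp]
  have hsm : (dotProduct (star v) ((((2 * Real.sqrt ε + ε : ℝ) : ℂ) • (1 : Matrix d d ℂ)) *ᵥ v)).re
      = (2 * Real.sqrt ε + ε) * nv := by
    rw [Matrix.smul_mulVec, Matrix.one_mulVec, dotProduct_smul]
    rw [hnv, smul_eq_mul, Complex.mul_re, Complex.ofReal_re, Complex.ofReal_im]
    ring
  rw [hsm, ← ha1]
  nlinarith [hcross_le, hb2, Real.sqrt_nonneg ε]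

lemma overlap_le_fid {d : Type*} [Fintype d] [DecidableEq d] {I : Type*} [Fintype I]
    (ρA ρB : Matrix d d ℂ) (hA : IsDensityMatrix ρA) (hB : IsDensityMatrix ρB)
    (σ : I → Matrix d d ℂ) (hσ : ∀ i, IsDensityMatrix (σ i))
    (p q : I → ℝ) (hp : ∀ i, 0 ≤ p i) (hq : ∀ i, 0 ≤ q i)
    (hmixA : ∑ i, p i • σ i = ρA) (hmixB : ∑ i, q i • σ i = ρB) :
    ∑ i, Real.sqrt (p i * q i) ≤ fidelity ρA ρB := by
  classical
  have hlam : ∀ i, 0 ≤ hA.1.1.eigenvalues i := hA.1.eigenvalues_nonneg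
  set S := specM hA.1.1 Real.sqrt with hSdef
  have hSh : Sᴴ = S := specM_isHermitian _ _
  have hSS : S * S = ρA := by
    rw [hSdef, specM_mul,
      specM_congr hA.1.1 (g := fun x => x) (fun i => Real.mul_self_sqrt (hlam i)), specM_id]
  have hS_psd : S.PosSemidef := specM_posSemidef hA.1.1 (fun i => Real.sqrt_nonneg _)
  have hS_sqrt : S = hA.1.sqrt := rfl
  set K := S * ρB * S with hKdef
  have hK_psd : K.PosSemidef := by
    have h := hB.1.mul_mul_conjTranspose_same S
    rwa [hSh] at h
  have hnu : ∀ i, 0 ≤ hK_psd.1.eigenvalues i := hK_psd.eigenvalues_nonneg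
  have hsqrtK : specM hK_psd.1 Real.sqrt = hK_psd.sqrt := by
    rfl
  have hfid : fidelity ρA ρB = ∑ i, Real.sqrt (hK_psd.1.eigenvalues i) := by
    have h1 : psdSqrt ρA = S := by
      unfold psdSqrt
      rw [dif_pos hA.1]
      exact hS_sqrt.symm
    have h2 : fidelity ρA ρB = (psdSqrt K).trace.re := by
      unfold fidelity
      rw [h1, ← hKdef]
    rw [h2]
    have h3 : psdSqrt K = hK_psd.sqrt := by
      unfold psdSqrt
      rw [dif_pos hK_psd]
      rfl
    rw [h3, ← hsqrtK, specM_trace_re]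
  -- main epsilon estimate
  have main : ∀ ε : ℝ, 0 < ε → ∑ i, Real.sqrt (p i * q i) ≤
      fidelity ρA ρB + (Fintype.card d) * Real.sqrt (2 * Real.sqrt ε + 2 * ε) := by
    intro ε hε
    set R := specM hA.1.1 (fun x => Real.sqrt (x + ε)) with hRdef
    set Rinv := specM hA.1.1 (fun x => (Real.sqrt (x + ε))⁻¹) with hRinvdef
    have hRh : Rᴴ = R := specM_isHermitian _ _
    have hRinvh : Rinvᴴ = Rinv := specM_isHermitian _ _
    have hxpos : ∀ i, 0 < Real.sqrt (hA.1.1.eigenvalues i + ε) :=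
      fun i => Real.sqrt_pos.mpr (by linarith [hlam i])
    have hRRinv : R * Rinv = 1 := by
      rw [hRdef, hRinvdef, specM_mul,
        specM_congr hA.1.1 (g := fun _ => 1) (fun i => mul_inv_cancel₀ (hxpos i).ne'), specM_one]
    have hRinvR : Rinv * R = 1 := by
      rw [hRdef, hRinvdef, specM_mul,
        specM_congr hA.1.1 (g := fun _ => 1) (fun i => inv_mul_cancel₀ (hxpos i).ne'), specM_one]
    have hRR : R * R = ρA + ((ε : ℝ) : ℂ) • 1 := by
      rw [hRdef, specM_mul]
      rw [specM_congr hA.1.1 (g := fun x => x + ε)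
        (fun i => Real.mul_self_sqrt (by linarith [hlam i]))]
      rw [← specM_add hA.1.1 (fun x => x) (fun _ => ε), specM_id, specM_const]
    set P0 := R * ρB * R with hP0def
    have hP0 : P0.PosSemidef := by
      have h := hB.1.mul_mul_conjTranspose_same R
      rwa [hRh] at h
    have hmu : ∀ i, 0 ≤ hP0.1.eigenvalues i := hP0.eigenvalues_nonneg
    have hmupos : ∀ i, 0 < Real.sqrt (hP0.1.eigenvalues i + ε) :=
      fun i => Real.sqrt_pos.mpr (by linarith [hmu i])
    set sP := specM hP0.1 (fun x => Real.sqrt (x + ε)) with hsPdef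
    set sPinv := specM hP0.1 (fun x => (Real.sqrt (x + ε))⁻¹) with hsPinvdef
    set F4 := specM hP0.1 (fun x => Real.sqrt (Real.sqrt (x + ε))) with hF4def
    set F4inv := specM hP0.1 (fun x => (Real.sqrt (Real.sqrt (x + ε)))⁻¹) with hF4invdef
    have hF4h : F4ᴴ = F4 := specM_isHermitian _ _
    have hF4invh : F4invᴴ = F4inv := specM_isHermitian _ _
    have hF4sq : F4 * F4 = sP := by
      rw [hF4def, hsPdef, specM_mul]
      exact specM_congr hP0.1 (fun i => Real.mul_self_sqrt (Real.sqrt_nonneg _))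
    have hF4i : F4 * F4inv = 1 := by
      rw [hF4def, hF4invdef, specM_mul,
        specM_congr hP0.1 (g := fun _ => 1)
          (fun i => mul_inv_cancel₀ (Real.sqrt_pos.mpr (hmupos i)).ne'), specM_one]
    have hF4invsq : F4inv * F4inv = sPinv := by
      rw [hF4invdef, hsPinvdef, specM_mul]
      refine specM_congr hP0.1 (fun i => ?_)
      rw [← mul_inv, Real.mul_self_sqrt (Real.sqrt_nonneg _)]
    have hsPsP : sP * sP = P0 + ((ε : ℝ) : ℂ) • 1 := by
      rw [hsPdef, specM_mul]
      rw [specM_congr hP0.1 (g := fun x => x + ε)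
        (fun i => Real.mul_self_sqrt (by linarith [hmu i]))]
      rw [← specM_add hP0.1 (fun x => x) (fun _ => ε), specM_id, specM_const]
    set G := Rinv * F4 with hGdef
    set Gi := F4inv * R with hGidef
    have hGGi : G * Gi = 1 := by
      rw [hGdef, hGidef]
      calc Rinv * F4 * (F4inv * R) = Rinv * ((F4 * F4inv) * R) := by noncomm_ring
        _ = 1 := by rw [hF4i, one_mul, hRinvR]
    have hAmat : G * Gᴴ = Rinv * sP * Rinv := by
      rw [hGdef, Matrix.conjTranspose_mul, hF4h, hRinvh]
      calc Rinv * F4 * (F4 * Rinv) = Rinv * (F4 * F4) * Rinv := by noncomm_ring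
        _ = _ := by rw [hF4sq]
    have hBmat : Giᴴ * Gi = R * sPinv * R := by
      rw [hGidef, Matrix.conjTranspose_mul, hF4invh, hRh]
      calc R * F4inv * (F4inv * R) = R * (F4inv * F4inv) * R := by noncomm_ring
        _ = _ := by rw [hF4invsq]
    set w := ∑ i, Real.sqrt (hP0.1.eigenvalues i + ε) with hwdef
    have hwnn : 0 ≤ w := Finset.sum_nonneg fun i _ => Real.sqrt_nonneg _
    have htrsP : (sP.trace).re = w := by rw [hsPdef, specM_trace_re]
    -- per-index quantities
    set x : I → ℝ := fun i => ((G * Gᴴ * σ i).trace).re with hxdef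
    set y : I → ℝ := fun i => ((Giᴴ * Gi * σ i).trace).re with hydef
    have hx0 : ∀ i, 0 ≤ x i := fun i =>
      trace_mul_re_nonneg (Matrix.posSemidef_self_mul_conjTranspose G) (hσ i).1
    have hy0 : ∀ i, 0 ≤ y i := fun i =>
      trace_mul_re_nonneg (Matrix.posSemidef_conjTranspose_mul_self Gi) (hσ i).1
    have hxy1 : ∀ i, 1 ≤ x i * y i := by
      intro i
      have h := cs_trace hGGi (hσ i).1
      rw [(hσ i).2] at h
      simpa using h
    have hsum_x : ∑ i, p i * x i = ((G * Gᴴ * ρA).trace).re := by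
      rw [← hmixA, Matrix.mul_sum, Matrix.trace_sum, Complex.re_sum]
      refine Finset.sum_congr rfl (fun i _ => ?_)
      rw [Matrix.mul_smul, Matrix.trace_smul, hxdef]
      rw [Complex.real_smul, Complex.mul_re, Complex.ofReal_re, Complex.ofReal_im]
      ring
    have hsum_y : ∑ i, q i * y i = ((Giᴴ * Gi * ρB).trace).re := by
      rw [← hmixB, Matrix.mul_sum, Matrix.trace_sum, Complex.re_sum]
      refine Finset.sum_congr rfl (fun i _ => ?_)
      rw [Matrix.mul_smul, Matrix.trace_smul, hydef]
      rw [Complex.real_smul, Complex.mul_re, Complex.ofReal_re, Complex.ofReal_im]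
      ring
    have htrA_le : ((G * Gᴴ * ρA).trace).re ≤ w := by
      have h2 : G * Gᴴ * (ρA + ((ε : ℝ) : ℂ) • 1) = Rinv * sP * R := by
        rw [hAmat, ← hRR]
        calc Rinv * sP * Rinv * (R * R) = Rinv * sP * ((Rinv * R) * R) := by noncomm_ring
          _ = _ := by rw [hRinvR, one_mul]
      have h3 : (Rinv * sP * R).trace = sP.trace := by
        rw [Matrix.trace_mul_cycle, hRRinv, one_mul]
      have h1 : G * Gᴴ * (ρA + ((ε : ℝ) : ℂ) • 1)
          = G * Gᴴ * ρA + ((ε : ℝ) : ℂ) • (G * Gᴴ) := by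
        rw [Matrix.mul_add, Matrix.mul_smul, mul_one]
      have h4 : 0 ≤ ((G * Gᴴ).trace).re :=
        trace_re_nonneg (Matrix.posSemidef_self_mul_conjTranspose G)
      have h5 : (G * Gᴴ * ρA).trace = sP.trace - ((ε : ℝ) : ℂ) • (G * Gᴴ).trace := by
        rw [← h3, ← h2, h1, Matrix.trace_add, Matrix.trace_smul]
        ring
      rw [h5, Complex.sub_re, htrsP]
      have h6 : (((ε : ℝ) : ℂ) • (G * Gᴴ).trace).re = ε * ((G * Gᴴ).trace).re := by
        rw [smul_eq_mul, Complex.mul_re, Complex.ofReal_re, Complex.ofReal_im]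
        ring
      rw [h6]
      nlinarith
    have htrB_le : ((Giᴴ * Gi * ρB).trace).re ≤ w := by
      have h2 : (Giᴴ * Gi * ρB).trace = (sPinv * P0).trace := by
        rw [hBmat]
        have e1 : R * sPinv * R * ρB = R * (sPinv * (R * ρB)) := by noncomm_ring
        rw [e1, Matrix.trace_mul_comm]
        have e2 : sPinv * (R * ρB) * R = sPinv * P0 := by rw [hP0def]; noncomm_ring
        rw [e2]
      have h3 : sPinv * P0 = specM hP0.1 (fun t => (Real.sqrt (t + ε))⁻¹ * t) := by
        conv_lhs => rw [show P0 = specM hP0.1 (fun t => t) from (specM_id hP0.1).symm]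
        rw [hsPinvdef, specM_mul]
      have h4 : ((sPinv * P0).trace).re
          = ∑ i, (Real.sqrt (hP0.1.eigenvalues i + ε))⁻¹ * hP0.1.eigenvalues i := by
        rw [h3, specM_trace_re]
      rw [h2, h4, hwdef]
      refine Finset.sum_le_sum (fun i _ => ?_)
      rw [inv_mul_le_iff₀ (hmupos i), Real.mul_self_sqrt (by linarith [hmu i])]
      linarith
    -- Cauchy-Schwarz combination
    have hoverlap_w : ∑ i, Real.sqrt (p i * q i) ≤ w := by
      have h1 : ∀ i, Real.sqrt (p i * q i) ≤ Real.sqrt ((p i * x i) * (q i * y i)) := by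
        intro i
        apply Real.sqrt_le_sqrt
        have h := hxy1 i
        have hpq : 0 ≤ p i * q i := mul_nonneg (hp i) (hq i)
        nlinarith
      have h2 : (∑ i, Real.sqrt ((p i * x i) * (q i * y i))) ^ 2
          ≤ (∑ i, p i * x i) * (∑ i, q i * y i) :=
        Finset.sum_sq_le_sum_mul_sum_of_sq_eq_mul Finset.univ
          (fun i _ => mul_nonneg (hp i) (hx0 i)) (fun i _ => mul_nonneg (hq i) (hy0 i))
          (fun i _ => Real.sq_sqrt (mul_nonneg (mul_nonneg (hp i) (hx0 i))
            (mul_nonneg (hq i) (hy0 i))))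
      have hqynn : 0 ≤ ∑ i, q i * y i :=
        Finset.sum_nonneg fun i _ => mul_nonneg (hq i) (hy0 i)
      have h3 : (∑ i, p i * x i) * (∑ i, q i * y i) ≤ w * w :=
        mul_le_mul (by rw [hsum_x]; exact htrA_le) (by rw [hsum_y]; exact htrB_le)
          hqynn hwnn
      calc ∑ i, Real.sqrt (p i * q i) ≤ ∑ i, Real.sqrt ((p i * x i) * (q i * y i)) :=
            Finset.sum_le_sum (fun i _ => h1 i)
        _ = Real.sqrt ((∑ i, Real.sqrt ((p i * x i) * (q i * y i))) ^ 2) :=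
            (Real.sqrt_sq (Finset.sum_nonneg fun i _ => Real.sqrt_nonneg _)).symm
        _ ≤ Real.sqrt (w * w) := Real.sqrt_le_sqrt (h2.trans h3)
        _ = w := Real.sqrt_mul_self hwnn
    -- variational bound : w ≤ (Z.trace).re
    set c : ℝ := 2 * Real.sqrt ε + 2 * ε with hcdef
    have hc0 : 0 < c := by positivity
    set Z := specM hK_psd.1 (fun t => Real.sqrt (t + c)) with hZdef
    set Zinv := specM hK_psd.1 (fun t => (Real.sqrt (t + c))⁻¹) with hZinvdef
    set W4 := specM hK_psd.1 (fun t => Real.sqrt (Real.sqrt (t + c))) with hW4def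
    set W4inv := specM hK_psd.1 (fun t => (Real.sqrt (Real.sqrt (t + c)))⁻¹) with hW4invdef
    have hnupos : ∀ i, 0 < Real.sqrt (hK_psd.1.eigenvalues i + c) :=
      fun i => Real.sqrt_pos.mpr (by linarith [hnu i])
    have hW4h : W4ᴴ = W4 := specM_isHermitian _ _
    have hW4invh : W4invᴴ = W4inv := specM_isHermitian _ _
    have hW4sq : W4 * W4 = Z := by
      rw [hW4def, hZdef, specM_mul]
      exact specM_congr hK_psd.1 (fun i => Real.mul_self_sqrt (Real.sqrt_nonneg _))
    have hW4i : W4 * W4inv = 1 := by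
      rw [hW4def, hW4invdef, specM_mul,
        specM_congr hK_psd.1 (g := fun _ => 1)
          (fun i => mul_inv_cancel₀ (Real.sqrt_pos.mpr (hnupos i)).ne'), specM_one]
    have hW4i' : W4inv * W4 = 1 := by
      rw [hW4def, hW4invdef, specM_mul,
        specM_congr hK_psd.1 (g := fun _ => 1)
          (fun i => inv_mul_cancel₀ (Real.sqrt_pos.mpr (hnupos i)).ne'), specM_one]
    have hW4invsq : W4inv * W4inv = Zinv := by
      rw [hW4invdef, hZinvdef, specM_mul]
      refine specM_congr hK_psd.1 (fun i => ?_)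
      rw [← mul_inv, Real.mul_self_sqrt (Real.sqrt_nonneg _)]
    have hZZ : Z * Z = K + ((c : ℝ) : ℂ) • 1 := by
      rw [hZdef, specM_mul]
      rw [specM_congr hK_psd.1 (g := fun t => t + c)
        (fun i => Real.mul_self_sqrt (by linarith [hnu i]))]
      rw [← specM_add hK_psd.1 (fun t => t) (fun _ => c), specM_id, specM_const]
    have hZinvZ : Zinv * Z = 1 := by
      rw [hZdef, hZinvdef, specM_mul,
        specM_congr hK_psd.1 (g := fun _ => 1)
          (fun i => inv_mul_cancel₀ (hnupos i).ne'), specM_one]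
    have hZinvpsd : Zinv.PosSemidef :=
      specM_posSemidef hK_psd.1 (fun i => by positivity)
    have hpos : 0 ≤ (((W4inv * sP - W4)ᴴ * (W4inv * sP - W4)).trace).re :=
      trace_re_nonneg (Matrix.posSemidef_conjTranspose_mul_self _)
    have hexp : ((W4inv * sP - W4)ᴴ * (W4inv * sP - W4)).trace
        = (Zinv * (P0 + ((ε : ℝ) : ℂ) • 1)).trace - sP.trace - sP.trace + Z.trace := by
      have hsPh : sPᴴ = sP := specM_isHermitian _ _
      have hCh : (W4inv * sP)ᴴ = sP * W4inv := by
        rw [Matrix.conjTranspose_mul, hsPh, hW4invh]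
      have e1 : sP * W4inv * W4 = sP := by rw [mul_assoc, hW4i', mul_one]
      have e2 : W4 * (W4inv * sP) = sP := by rw [← mul_assoc, hW4i, one_mul]
      have e0 : (W4inv * sP - W4)ᴴ * (W4inv * sP - W4)
          = sP * W4inv * (W4inv * sP) - sP - sP + Z := by
        rw [Matrix.conjTranspose_sub, hCh, hW4h, Matrix.sub_mul, Matrix.mul_sub,
          Matrix.mul_sub, e1, e2, hW4sq]
        noncomm_ring
      rw [e0]
      have e3 : (sP * W4inv * (W4inv * sP)).trace
          = (Zinv * (P0 + ((ε : ℝ) : ℂ) • 1)).trace := by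
        have e : sP * W4inv * (W4inv * sP) = sP * Zinv * sP := by
          rw [← hW4invsq]; noncomm_ring
        rw [e, Matrix.trace_mul_cycle, Matrix.trace_mul_comm, hsPsP]
      rw [Matrix.trace_add, Matrix.trace_sub, Matrix.trace_sub, e3]
    -- comparison with K + c
    have hD' : ((K + ((c : ℝ) : ℂ) • 1) - (P0 + ((ε : ℝ) : ℂ) • 1)).PosSemidef := by
      have hD := stepG hA.1 hA.2 hB.1 hB.2 hε
      have hsplit : ((c : ℝ) : ℂ) • (1 : Matrix d d ℂ)
          = ((2 * Real.sqrt ε + ε : ℝ) : ℂ) • 1 + ((ε : ℝ) : ℂ) • 1 := by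
        rw [← add_smul]
        congr 1
        rw [hcdef]
        push_cast
        ring
      have e : (K + ((c : ℝ) : ℂ) • 1) - (P0 + ((ε : ℝ) : ℂ) • 1)
          = S * ρB * S + ((2 * Real.sqrt ε + ε : ℝ) : ℂ) • 1 - R * ρB * R := by
        rw [hsplit, hKdef, hP0def]
        abel
      rw [e]
      exact hD
    have htr2 : ((Zinv * (P0 + ((ε : ℝ) : ℂ) • 1)).trace).re
        ≤ ((Zinv * (K + ((c : ℝ) : ℂ) • 1)).trace).re := by
      have h0 := trace_mul_re_nonneg hZinvpsd hD'
      have e : Zinv * ((K + ((c : ℝ) : ℂ) • 1) - (P0 + ((ε : ℝ) : ℂ) • 1))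
          = Zinv * (K + ((c : ℝ) : ℂ) • 1) - Zinv * (P0 + ((ε : ℝ) : ℂ) • 1) :=
        mul_sub _ _ _
      rw [e, Matrix.trace_sub, Complex.sub_re] at h0
      linarith
    have htr3 : (Zinv * (K + ((c : ℝ) : ℂ) • 1)).trace = Z.trace := by
      rw [← hZZ, ← mul_assoc, hZinvZ, one_mul]
    have hw_le : w ≤ (Z.trace).re := by
      have hre := congrArg Complex.re hexp
      rw [Complex.add_re, Complex.sub_re, Complex.sub_re, htrsP] at hre
      rw [htr3] at htr2
      linarith [hpos, hre, htr2]
    have hZtr : (Z.trace).re = ∑ i, Real.sqrt (hK_psd.1.eigenvalues i + c) := by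
      rw [hZdef, specM_trace_re]
    have hfinal : (Z.trace).re ≤ fidelity ρA ρB + (Fintype.card d) * Real.sqrt c := by
      rw [hZtr, hfid]
      calc ∑ i, Real.sqrt (hK_psd.1.eigenvalues i + c)
          ≤ ∑ i, (Real.sqrt (hK_psd.1.eigenvalues i) + Real.sqrt c) :=
            Finset.sum_le_sum (fun i _ => sqrt_add_le _ _ (hnu i) hc0.le)
        _ = (∑ i, Real.sqrt (hK_psd.1.eigenvalues i)) + (Fintype.card d) * Real.sqrt c := by
            rw [Finset.sum_add_distrib, Finset.sum_const, Finset.card_univ, nsmul_eq_mul]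
    calc ∑ i, Real.sqrt (p i * q i) ≤ w := hoverlap_w
      _ ≤ (Z.trace).re := hw_le
      _ ≤ fidelity ρA ρB + (Fintype.card d) * Real.sqrt c := hfinal
  -- limit ε → 0⁺
  have hcont : Filter.Tendsto
      (fun ε : ℝ => fidelity ρA ρB + (Fintype.card d) * Real.sqrt (2 * Real.sqrt ε + 2 * ε))
      (nhdsWithin 0 (Set.Ioi 0)) (nhds (fidelity ρA ρB)) := by
    have h0 : Continuous
        (fun ε : ℝ => fidelity ρA ρB + (Fintype.card d) * Real.sqrt (2 * Real.sqrt ε + 2 * ε)) := by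
      apply continuous_const.add
      apply continuous_const.mul
      apply Real.continuous_sqrt.comp
      exact ((continuous_const.mul Real.continuous_sqrt).add (continuous_const.mul continuous_id))
    have h1 : Filter.Tendsto
        (fun ε : ℝ => fidelity ρA ρB + (Fintype.card d) * Real.sqrt (2 * Real.sqrt ε + 2 * ε))
        (nhdsWithin 0 (Set.Ioi 0))
        (nhds (fidelity ρA ρB + (Fintype.card d) * Real.sqrt (2 * Real.sqrt 0 + 2 * 0))) :=
      (h0.tendsto 0).mono_left nhdsWithin_le_nhds
    simpa using h1
  exact ge_of_tendsto hcont
    (Filter.eventually_of_mem self_mem_nhdsWithin (fun ε hε => main ε hε))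

lemma psdSqrt_eq {d : Type*} [Fintype d] [DecidableEq d]
    {A : Matrix d d ℂ} (hA : A.PosSemidef) : psdSqrt A = hA.sqrt := by
  unfold psdSqrt
  rw [dif_pos hA]
  rfl

lemma fidelity_nonneg {d : Type*} [Fintype d] [DecidableEq d]
    {ρA ρB : Matrix d d ℂ} (hA : ρA.PosSemidef) (hB : ρB.PosSemidef) :
    0 ≤ fidelity ρA ρB := by
  have hK : (psdSqrt ρA * ρB * psdSqrt ρA).PosSemidef := by
    rw [psdSqrt_eq hA]
    have h := hB.mul_mul_conjTranspose_same hA.sqrt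
    rwa [hA.posSemidef_sqrt.isHermitian.eq] at h
  unfold fidelity
  rw [psdSqrt_eq hK]
  exact trace_re_nonneg hK.posSemidef_sqrt

end P4

/-- **P4.** The Bhattacharyya overlap of any common preparation is at most the
fidelity; consequently the compatibility is bounded above by the fidelity. -/
theorem overlap_le_fidelity_and_compat_le_fidelity {n : ℕ} {I : Type*} [Fintype I]
    (ρA ρB : Matrix (Fin n) (Fin n) ℂ)
    (hA : IsDensityMatrix ρA) (hB : IsDensityMatrix ρB)
    (σ : I → Matrix (Fin n) (Fin n) ℂ) (hσ : ∀ i, IsDensityMatrix (σ i))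
    (p q : I → ℝ) (hp : ∀ i, 0 ≤ p i) (hq : ∀ i, 0 ≤ q i)
    (hp1 : ∑ i, p i = 1) (hq1 : ∑ i, q i = 1)
    (hmixA : ∑ i, p i • σ i = ρA) (hmixB : ∑ i, q i • σ i = ρB) :
    ∑ i, Real.sqrt (p i * q i) ≤ fidelity ρA ρB ∧
      compat ρA ρB ≤ fidelity ρA ρB := by
  constructor
  · exact P4.overlap_le_fid ρA ρB hA hB σ hσ p q hp hq hmixA hmixB
  · apply Real.sSup_le
    · rintro c ⟨m, σ2, p2, q2, hσ2, hp2, hq2, hp12, hq12, hmA2, hmB2, rfl⟩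
      exact P4.overlap_le_fid ρA ρB hA hB σ2 hσ2 p2 q2 hp2 hq2 hmA2 hmB2
    · exact P4.fidelity_nonneg hA.1 hB.1
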